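/- Let ρ = diag(1/2, 1/2, 0) and ρ' = diag(2/3, 1/6, 1/6) be diagonal density matrices on ℂ³ with respect to the basis {|1⟩,|2⟩,|3⟩}, and let σ = diag(2/3, 1/3) on ℂ² with basis {|1⟩_C, |2⟩_C}. Let U be the unitary on ℂ³⊗ℂ² defined by U|2⟩⊗|1⟩_C = |1⟩⊗|2⟩_C, U|1⟩⊗|2⟩_C = |2⟩⊗|1⟩_C, U|3⟩⊗|1⟩_C = |2⟩⊗|2⟩_C, U|2⟩⊗|2⟩_C = |3⟩⊗|1⟩_C, and U fixing the remaining basis vectors |1⟩⊗|1⟩_C and |3⟩⊗|2⟩_C. Then Tr_C[U(ρ⊗σ)U†] = ρ' and Tr_S[U(ρ⊗σ)U†] = σ; i.e., U implements the exact catalytic transition ρ →₀ ρ' with a two-dimensional catalyst. -/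

import Mathlib

open Matrix BigOperators
open scoped Kronecker ComplexOrder

/-- A density matrix: positive semidefinite with trace 1. -/
def IsDensityMatrix {n : Type*} [Fintype n] [DecidableEq n] (ρ : Matrix n n ℂ) : Prop :=
  ρ.PosSemidef ∧ ρ.trace = 1

/-- The von Neumann entropy `H(ρ) = -Tr[ρ log ρ]`, computed via the eigenvalues of `ρ`
(with the convention `0 log 0 = 0`). -/
noncomputable def vnEntropy {n : Type*} [Fintype n] [DecidableEq n] (ρ : Matrix n n ℂ) : ℝ :=
  if h : ρ.IsHermitian then -∑ i, h.eigenvalues i * Real.log (h.eigenvalues i) else 0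

/-- Partial trace over the first (system) tensor factor. -/
noncomputable def ptraceS {s c : Type*} [Fintype s] [Fintype c]
    (M : Matrix (s × c) (s × c) ℂ) : Matrix c c ℂ :=
  Matrix.of fun i j => ∑ k, M (k, i) (k, j)

/-- Partial trace over the second (catalyst) tensor factor. -/
noncomputable def ptraceC {s c : Type*} [Fintype s] [Fintype c]
    (M : Matrix (s × c) (s × c) ℂ) : Matrix s s ℂ :=
  Matrix.of fun i j => ∑ k, M (i, k) (j, k)
/-- The permutation of basis vectors of ℂ³⊗ℂ² underlying the catalytic unitary:
|2⟩⊗|1⟩_C ↔ |1⟩⊗|2⟩_C and |3⟩⊗|1⟩_C ↔ |2⟩⊗|2⟩_C, all other basis vectors fixed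
(indices counted from 0 here: (1,0) ↔ (0,1) and (2,0) ↔ (1,1)). -/
noncomputable def examplePerm : Equiv.Perm (Fin 3 × Fin 2) :=
  Equiv.swap ((1 : Fin 3), (0 : Fin 2)) ((0 : Fin 3), (1 : Fin 2)) *
    Equiv.swap ((2 : Fin 3), (0 : Fin 2)) ((1 : Fin 3), (1 : Fin 2))

/-- The corresponding permutation unitary U on ℂ³⊗ℂ², with U|y⟩ = |examplePerm y⟩. -/
noncomputable def exampleUnitary : Matrix (Fin 3 × Fin 2) (Fin 3 × Fin 2) ℂ :=
  Matrix.of fun x y => if x = examplePerm y then (1 : ℂ) else 0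


lemma exampleUnitary_eq : exampleUnitary = (examplePerm⁻¹).toPEquiv.toMatrix := by
  ext x y
  simp only [exampleUnitary, Matrix.of_apply, PEquiv.toMatrix_apply, Equiv.toPEquiv_apply,
    Option.mem_def, Option.some.injEq]
  congr 1
  rw [eq_iff_iff]
  constructor
  · rintro rfl; simp
  · rintro rfl; simp

lemma exampleUnitary_conjTranspose : exampleUnitaryᴴ = (examplePerm).toPEquiv.toMatrix := by
  ext x y
  simp only [exampleUnitary, Matrix.conjTranspose_apply, Matrix.of_apply,
    PEquiv.toMatrix_apply, Equiv.toPEquiv_apply, Option.mem_def, Option.some.injEq,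
    apply_ite (star : ℂ → ℂ), star_one, star_zero, eq_comm]

lemma exampleUnitary_conj_eq (M : Matrix (Fin 3 × Fin 2) (Fin 3 × Fin 2) ℂ) :
    exampleUnitary * M * exampleUnitaryᴴ =
      M.submatrix (⇑examplePerm⁻¹) (⇑examplePerm⁻¹) := by
  rw [exampleUnitary_conjTranspose, exampleUnitary_eq, Matrix.mul_assoc,
    PEquiv.mul_toMatrix_toPEquiv, PEquiv.toMatrix_toPEquiv_mul]
  rfl

/-- **An exact catalytic transition with a two-dimensional catalyst.** For
ρ = diag(1/2,1/2,0), ρ' = diag(2/3,1/6,1/6) and σ = diag(2/3,1/3), the permutation unitary U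
defined above satisfies Tr_C[U(ρ⊗σ)U†] = ρ' and Tr_S[U(ρ⊗σ)U†] = σ, i.e. it implements the
exact catalytic transition ρ →₀ ρ'. -/
theorem example_exact_catalytic_transition :
    exampleUnitary ∈ Matrix.unitaryGroup (Fin 3 × Fin 2) ℂ ∧
    ptraceC (exampleUnitary *
        ((Matrix.diagonal ![(1/2 : ℂ), 1/2, 0]) ⊗ₖ (Matrix.diagonal ![(2/3 : ℂ), 1/3])) *
        exampleUnitaryᴴ) = Matrix.diagonal ![(2/3 : ℂ), 1/6, 1/6] ∧
    ptraceS (exampleUnitary *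
        ((Matrix.diagonal ![(1/2 : ℂ), 1/2, 0]) ⊗ₖ (Matrix.diagonal ![(2/3 : ℂ), 1/3])) *
        exampleUnitaryᴴ) = Matrix.diagonal ![(2/3 : ℂ), 1/3] := by
  refine ⟨?_, ?_, ?_⟩
  · rw [Matrix.mem_unitaryGroup_iff, Matrix.star_eq_conjTranspose,
      exampleUnitary_conjTranspose, exampleUnitary_eq,
      ← PEquiv.toMatrix_trans, ← Equiv.toPEquiv_trans]
    rw [Equiv.Perm.inv_def, Equiv.symm_trans_self, Equiv.toPEquiv_refl, PEquiv.toMatrix_refl]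
  · rw [exampleUnitary_conj_eq]
    ext i j
    fin_cases i <;> fin_cases j <;>
      simp [ptraceC, examplePerm, _root_.mul_inv_rev, Equiv.swap_inv, Fin.sum_univ_succ,
        Equiv.swap_apply_def, Matrix.diagonal, Prod.ext_iff] <;> norm_num
  · rw [exampleUnitary_conj_eq]
    ext i j
    fin_cases i <;> fin_cases j <;>
      simp [ptraceS, examplePerm, _root_.mul_inv_rev, Equiv.swap_inv, Fin.sum_univ_succ,
        Equiv.swap_apply_def, Matrix.diagonal, Prod.ext_iff] <;> norm_num
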